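/- If soc(A) is a cyclic R-module, then A has the extension property with respect to the symmetrized weight composition swc_G for every subgroup G of Aut_R(A). -/

import Mathlib

variable {R A : Type*} [Ring R] [AddCommGroup A] [Module R A]

/-- The orbit of `a₀ ∈ A` under a subgroup `G ≤ Aut_R(A)`; the orbits in `A/G` are
exactly the sets `orbitG G a₀` for `a₀ : A`. -/
def orbitG (G : Subgroup (A ≃ₗ[R] A)) (a₀ : A) : Set A :=
  {b | ∃ g ∈ G, (g : A ≃ₗ[R] A) a₀ = b}

/-- The symmetrized weight composition built on `G`: `swcG G a a₀` is the number of
coordinates of `a ∈ A^n` lying in the orbit of `a₀`. -/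
noncomputable def swcG (G : Subgroup (A ≃ₗ[R] A)) {n : ℕ} (a : Fin n → A) (a₀ : A) : ℚ :=
  Nat.card {i : Fin n // a i ∈ orbitG G a₀}

/-- Membership in the closure `Ḡ` of `G`: `g` maps every `G`-orbit onto itself. -/
def inClosure (G : Subgroup (A ≃ₗ[R] A)) (g : A ≃ₗ[R] A) : Prop :=
  ∀ a₀ : A, (g : A ≃ₗ[R] A) '' orbitG G a₀ = orbitG G a₀

/-- A map `h : A^n → A^n` is `G`-monomial if there are a permutation `π` and
automorphisms `g₁, …, g_n` in the closure `Ḡ` with `h(a)_i = g_i (a_{π i})`. -/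
def IsGMonomial (G : Subgroup (A ≃ₗ[R] A)) {n : ℕ} (h : (Fin n → A) → (Fin n → A)) : Prop :=
  ∃ (π : Equiv.Perm (Fin n)) (g : Fin n → (A ≃ₗ[R] A)),
    (∀ i, inClosure G (g i)) ∧ ∀ (a : Fin n → A) (i : Fin n), h a i = (g i) (a (π i))

/-- The socle of a module: the sum of all simple submodules, i.e. the supremum of the
atoms of the submodule lattice. -/
def socle (R A : Type*) [Ring R] [AddCommGroup A] [Module R A] : Submodule R A :=
  sSup {S : Submodule R A | IsAtom S}

/-- `A` has the extension property with respect to `swc_G`: for every length `n`,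
every linear code `C ⊆ A^n` and every `swc_G`-isometry `f : C → A^n`, the map `f`
extends to a `G`-monomial map of `A^n`. -/
def HasExtensionProperty (R : Type*) (A : Type*) [Ring R] [AddCommGroup A] [Module R A]
    (G : Subgroup (A ≃ₗ[R] A)) : Prop :=
  ∀ n : ℕ, 0 < n → ∀ (C : Submodule R (Fin n → A)) (f : C →ₗ[R] (Fin n → A)),
    (∀ (c : C) (a₀ : A), swcG G (f c : Fin n → A) a₀ = swcG G (c : Fin n → A) a₀) →
    ∃ h : (Fin n → A) → (Fin n → A),
      IsGMonomial G h ∧ ∀ c : C, h (c : Fin n → A) = f c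


open Function

section Part1


/-- The largest submodule contained in the kernel of an additive character. -/
def mker {M : Type*} [AddCommGroup M] [Module R M] (ψ : AddChar M ℂ) : Submodule R M where
  carrier := {x | ∀ r : R, ψ (r • x) = 1}
  add_mem' := by
    intro x y hx hy r
    rw [smul_add, AddChar.map_add_eq_mul, hx r, hy r, one_mul]
  zero_mem' := by intro r; rw [smul_zero, AddChar.map_zero_eq_one]
  smul_mem' := by
    intro s x hx r
    rw [smul_smul]
    exact hx (r * s)

/-- `M` admits a character that does not vanish identically on any atom. -/
def GoodChar (R : Type*) [Ring R] (M : Type*) [AddCommGroup M] [Module R M] : Prop :=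
  ∃ ψ : AddChar M ℂ, ∀ P : Submodule R M, IsAtom P → ∃ x ∈ P, ψ x ≠ 1

theorem GoodChar.of_linearEquiv {M N : Type*} [AddCommGroup M] [Module R M]
    [AddCommGroup N] [Module R N] (e : M ≃ₗ[R] N) (h : GoodChar R N) : GoodChar R M := by
  obtain ⟨ψ, hψ⟩ := h
  refine ⟨ψ.compAddMonoidHom e.toLinearMap.toAddMonoidHom, fun P hP => ?_⟩
  have hP' : IsAtom (Submodule.map (e : M →ₗ[R] N) P) := by
    have := (Submodule.orderIsoMapComap e).isAtom_iff P
    rw [Submodule.orderIsoMapComap_apply] at this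
    exact this.mpr hP
  obtain ⟨y, hy, hne⟩ := hψ _ hP'
  obtain ⟨x, hx, rfl⟩ := Submodule.mem_map.mp hy
  exact ⟨x, hx, hne⟩

theorem exists_genChar_of_good {M : Type*} [AddCommGroup M] [Module R M] [Finite M]
    (h : GoodChar R M) : ∃ ψ : AddChar M ℂ, ∀ x : M, (∀ r : R, ψ (r • x) = 1) → x = 0 := by
  obtain ⟨ψ, hψ⟩ := h
  refine ⟨ψ, fun x hx => ?_⟩
  by_contra hx0
  have hbot : (mker (R := R) ψ) ≠ ⊥ := by
    intro hb
    apply hx0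
    have : x ∈ mker (R := R) ψ := hx
    rw [hb] at this
    simpa using this
  obtain ⟨P, hPatom, hPle⟩ := (IsAtomic.eq_bot_or_exists_atom_le (mker (R := R) ψ)).resolve_left hbot
  obtain ⟨y, hyP, hy1⟩ := hψ P hPatom
  have : ψ ((1 : R) • y) = 1 := hPle hyP 1
  rw [one_smul] at this
  exact hy1 this

theorem cyclic_of_surjective {M N : Type*} [AddCommGroup M] [Module R M]
    [AddCommGroup N] [Module R N] (f : M →ₗ[R] N) (hf : Surjective f)
    (h : ∃ x : M, Submodule.span R {x} = ⊤) : ∃ y : N, Submodule.span R {y} = ⊤ := by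
  obtain ⟨x, hx⟩ := h
  refine ⟨f x, ?_⟩
  rw [← Set.image_singleton, ← Submodule.map_span, hx, Submodule.map_top,
    LinearMap.range_eq_top.mpr hf]

theorem isAtom_comap_subtype {A : Type*} [AddCommGroup A] [Module R A]
    (S P : Submodule R A) (hP : IsAtom P) (hle : P ≤ S) :
    IsAtom (P.comap S.subtype) := by
  have hmap : (P.comap S.subtype).map S.subtype = P := by
    rw [Submodule.map_comap_subtype, inf_eq_right.mpr hle]
  constructor
  · intro hb
    rw [hb, Submodule.map_bot] at hmap
    exact hP.1 hmap.symm
  · intro Q hQ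
    have h1 : Q.map S.subtype < P := by
      rw [← hmap]
      exact Submodule.map_strictMono_of_injective (Submodule.injective_subtype S) hQ
    have h2 := hP.2 _ h1
    have := Submodule.map_injective_of_injective (Submodule.injective_subtype S)
      (by rw [h2, Submodule.map_bot] : Q.map S.subtype = Submodule.map S.subtype ⊥)
    exact this

end Part1

open Function

section Part1b

/-- Product of characters on a finite product of groups. -/
def prodChar {γ : Type*} [Fintype γ] {Mf : γ → Type*} [∀ c, AddCommGroup (Mf c)]
    (ψ : ∀ c, AddChar (Mf c) ℂ) : AddChar (∀ c, Mf c) ℂ where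
  toFun x := ∏ c, ψ c (x c)
  map_zero_eq_one' := by simp
  map_add_eq_mul' a b := by
    rw [← Finset.prod_mul_distrib]
    exact Finset.prod_congr rfl fun c _ => by
      simpa using (ψ c).map_add_eq_mul (a c) (b c)

theorem quotByRel {M : Type*} [AddCommGroup M] (B : AddSubgroup M) (ψ : AddChar M ℂ)
    (h : ∀ x ∈ B, ψ x = 1) {a b : M} (hab : Setoid.r (self := QuotientAddGroup.leftRel B) a b) :
    ψ a = ψ b := by
  rw [QuotientAddGroup.leftRel_apply] at hab
  have : ψ b = ψ (a + (-a + b)) := by rw [add_neg_cancel_left]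
  rw [this, AddChar.map_add_eq_mul, h _ hab, mul_one]

/-- A character vanishing on a subgroup descends to the quotient. -/
def quotChar {M : Type*} [AddCommGroup M] (B : AddSubgroup M) (ψ : AddChar M ℂ)
    (h : ∀ x ∈ B, ψ x = 1) : AddChar (M ⧸ B) ℂ where
  toFun := fun q => Quotient.liftOn' q ψ (fun _ _ hab => quotByRel B ψ h hab)
  map_zero_eq_one' := by
    show ψ 0 = 1
    exact ψ.map_zero_eq_one
  map_add_eq_mul' := by
    intro a b
    induction a using QuotientAddGroup.induction_on
    induction b using QuotientAddGroup.induction_on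
    exact ψ.map_add_eq_mul _ _

theorem quotChar_mk {M : Type*} [AddCommGroup M] (B : AddSubgroup M) (ψ : AddChar M ℂ)
    (h : ∀ x ∈ B, ψ x = 1) (x : M) : quotChar B ψ h ((x : M ⧸ B)) = ψ x := rfl

theorem card_addChar (α : Type*) [AddCommGroup α] [Finite α] :
    Nat.card (AddChar α ℂ) = Nat.card α := by
  cases nonempty_fintype α
  haveI : Fintype (AddChar α ℂ) := Fintype.ofFinite _
  rw [Nat.card_eq_fintype_card, Nat.card_eq_fintype_card]
  convert AddChar.card_eq using 2

/-- Counting characters vanishing on a subgroup. -/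
theorem card_vanishing_le {M : Type*} [AddCommGroup M] [Finite M] (B : AddSubgroup M) :
    Nat.card {ψ : AddChar M ℂ // ∀ x ∈ B, ψ x = 1} ≤ Nat.card (M ⧸ B) := by
  rw [← card_addChar (M ⧸ B)]
  apply Nat.card_le_card_of_injective
    (fun p => quotChar B p.1 p.2)
  · intro p q hpq
    apply Subtype.ext
    ext x
    have := congrArg (fun (c : AddChar (M ⧸ B) ℂ) => c (x : M ⧸ B)) hpq
    simpa [quotChar_mk] using this

end Part1b

open Function

section Part1c

theorem atom_pi_iso {ι : Type*} {T : ι → Type*} [∀ i, AddCommGroup (T i)] [∀ i, Module R (T i)]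
    [∀ i, IsSimpleModule R (T i)] (P : Submodule R (∀ i, T i)) (hP : IsAtom P) :
    ∃ i, Nonempty (↥P ≃ₗ[R] T i) := by
  haveI : IsSimpleModule R P := isSimpleModule_iff_isAtom.mpr hP
  obtain ⟨x, hxP, hx0⟩ := Submodule.ne_bot_iff P |>.mp hP.1
  obtain ⟨i, hi⟩ : ∃ i, x i ≠ 0 := by
    by_contra hc
    push_neg at hc
    exact hx0 (funext hc)
  set f := (LinearMap.proj i (φ := T)).comp P.subtype with hf
  have hf0 : f ≠ 0 := by
    intro h
    apply hi
    have : f ⟨x, hxP⟩ = x i := rfl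
    rw [h] at this
    exact this.symm
  have hinj : Function.Injective f := LinearMap.injective_of_ne_zero hf0
  have hrange : LinearMap.range f ≠ ⊥ := by
    simpa [LinearMap.range_eq_bot] using hf0
  have htop : LinearMap.range f = ⊤ := (eq_bot_or_eq_top _).resolve_left hrange
  exact ⟨i, ⟨(LinearEquiv.ofInjective f hinj).trans
    ((LinearEquiv.ofEq _ _ htop).trans (Submodule.topEquiv))⟩⟩

theorem goodChar_pi_of_slices {γ : Type*} [Fintype γ] {Mf : γ → Type*}
    [∀ c, AddCommGroup (Mf c)] [∀ c, Module R (Mf c)]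
    (hsl : ∀ P : Submodule R (∀ c, Mf c), IsAtom P → ∃ c, ∀ x ∈ P, ∀ c', c' ≠ c → x c' = 0)
    (hg : ∀ c, GoodChar R (Mf c)) : GoodChar R (∀ c, Mf c) := by
  classical
  choose ψ hψ using hg
  refine ⟨prodChar ψ, fun P hP => ?_⟩
  obtain ⟨c, hc⟩ := hsl P hP
  haveI : IsSimpleModule R P := isSimpleModule_iff_isAtom.mpr hP
  set f : (∀ c', Mf c') →ₗ[R] Mf c := LinearMap.proj c with hfdef
  have hinj : Function.Injective (f.comp P.subtype) := by
    intro a b hab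
    apply Subtype.ext
    funext c'
    by_cases h' : c' = c
    · subst h'
      exact hab
    · rw [hc a.1 a.2 c' h', hc b.1 b.2 c' h']
  have hrange : LinearMap.range (f.comp P.subtype) = P.map f := by
    rw [LinearMap.range_comp, Submodule.range_subtype]
  have hQatom : IsAtom (P.map f) := by
    haveI : IsSimpleModule R (LinearMap.range (f.comp P.subtype)) :=
      IsSimpleModule.congr (LinearEquiv.ofInjective _ hinj).symm
    rw [← hrange]
    exact IsSimpleModule.isAtom
  obtain ⟨y, hyQ, hy1⟩ := hψ c _ hQatom
  obtain ⟨x, hxP, rfl⟩ := Submodule.mem_map.mp hyQ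
  refine ⟨x, hxP, ?_⟩
  have : prodChar ψ x = ψ c (f x) := by
    show (∏ c', ψ c' (x c')) = _
    rw [Finset.prod_eq_single c]
    · rfl
    · intro c' _ hne
      rw [hc x hxP c' hne, AddChar.map_zero_eq_one]
    · intro h
      exact absurd (Finset.mem_univ c) h
  rw [this]
  exact hy1

end Part1c

open Function

section Part1d

theorem goodChar_isotypic {ι : Type*} [Fintype ι] {T : ι → Type*} [∀ i, AddCommGroup (T i)]
    [∀ i, Module R (T i)] [∀ i, IsSimpleModule R (T i)] [∀ i, Finite (T i)]
    {W : Type*} [AddCommGroup W] [Module R W] [IsSimpleModule R W] [Finite W]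
    (e : ∀ i, W ≃ₗ[R] T i)
    (hcyc : ∃ x : ∀ i, T i, Submodule.span R {x} = ⊤) :
    GoodChar R (∀ i, T i) := by
  classical
  set t := Nat.card W with ht
  have ht0 : 0 < t := Nat.card_pos
  have hch : ∀ P : Submodule R (∀ i, T i), IsAtom P →
      ∃ g : W →ₗ[R] (∀ i, T i), Function.Injective g ∧ LinearMap.range g = P := by
    intro P hP
    obtain ⟨i, ⟨φ⟩⟩ := atom_pi_iso P hP
    let ew : W ≃ₗ[R] ↥P := (e i).trans φ.symm
    refine ⟨P.subtype.comp ew.toLinearMap, ?_, ?_⟩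
    · exact (Submodule.injective_subtype P).comp ew.injective
    · rw [LinearMap.range_comp, LinearEquiv.range, Submodule.map_top, Submodule.range_subtype]
  cases nonempty_fintype (∀ i, T i)
  haveI : Fintype (AddChar (∀ i, T i) ℂ) := Fintype.ofFinite _
  haveI : Fintype (Submodule R (∀ i, T i)) := Fintype.ofFinite _
  haveI : Finite (W →ₗ[R] (∀ i, T i)) :=
    Finite.of_injective (fun f => (f : W → ∀ i, T i)) LinearMap.coe_injective
  haveI : Fintype (W →ₗ[R] (∀ i, T i)) := Fintype.ofFinite _
  set atomsF : Finset (Submodule R (∀ i, T i)) := Finset.univ.filter IsAtom with hatomsF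
  choose gfun hginj hgrange using hch
  have h0 : ∀ P (hP : IsAtom P), gfun P hP ≠ 0 := by
    intro P hP hg0
    apply hP.1
    rw [← hgrange P hP, hg0, LinearMap.range_zero]
  -- bound on the number of atoms
  have hcardAtoms : atomsF.card ≤ Nat.card (W →ₗ[R] (∀ i, T i)) - 1 := by
    set F : Submodule R (∀ i, T i) → (W →ₗ[R] (∀ i, T i)) :=
      fun P => if h : IsAtom P then gfun P h else 0 with hF
    have hle : atomsF.card ≤ (Finset.univ.erase (0 : W →ₗ[R] (∀ i, T i))).card := by
      apply Finset.card_le_card_of_injOn F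
      · intro P hP
        rw [Finset.mem_coe, hatomsF, Finset.mem_filter] at hP
        rw [Finset.mem_coe, Finset.mem_erase]
        refine ⟨?_, Finset.mem_univ _⟩
        simp only [hF, dif_pos hP.2]
        exact h0 P hP.2
      · intro P hP Q hQ hPQ
        rw [Finset.mem_coe, hatomsF, Finset.mem_filter] at hP hQ
        have hr : LinearMap.range (F P) = LinearMap.range (F Q) := by rw [hPQ]
        simp only [hF, dif_pos hP.2, dif_pos hQ.2, hgrange] at hr
        exact hr
    calc atomsF.card ≤ _ := hle
      _ = Fintype.card (W →ₗ[R] (∀ i, T i)) - 1 := by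
          rw [Finset.card_erase_of_mem (Finset.mem_univ _), Finset.card_univ]
      _ = Nat.card (W →ₗ[R] (∀ i, T i)) - 1 := by rw [Nat.card_eq_fintype_card]
  -- the two Hom-sets have the same cardinality
  have hcard1 : Nat.card (W →ₗ[R] (∀ i, T i)) = Nat.card ((∀ i, T i) →ₗ[R] W) := by
    have e1 : (W →ₗ[R] (∀ i, T i)) ≃ ∀ i, (W →ₗ[R] T i) :=
      { toFun := fun f i => (LinearMap.proj i).comp f
        invFun := fun F => LinearMap.pi F
        left_inv := fun f => LinearMap.ext fun w => funext fun i => rfl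
        right_inv := fun F => funext fun i => LinearMap.ext fun w => rfl }
    have e2 : ((∀ i, T i) →ₗ[R] W) ≃ ∀ i, (T i →ₗ[R] W) := (LinearMap.lsum R T ℕ).symm.toEquiv
    have e3 : ∀ i, (W →ₗ[R] T i) ≃ (W →ₗ[R] W) := fun i =>
      { toFun := fun f => (e i).symm.toLinearMap.comp f
        invFun := fun f => (e i).toLinearMap.comp f
        left_inv := fun f => by ext w; simp
        right_inv := fun f => by ext w; simp }
    have e4 : ∀ i, (T i →ₗ[R] W) ≃ (W →ₗ[R] W) := fun i =>
      { toFun := fun f => f.comp (e i).toLinearMap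
        invFun := fun f => f.comp (e i).symm.toLinearMap
        left_inv := fun f => by ext x; simp
        right_inv := fun f => by ext w; simp }
    calc Nat.card (W →ₗ[R] (∀ i, T i)) = Nat.card (∀ i, (W →ₗ[R] T i)) := Nat.card_congr e1
      _ = ∏ i, Nat.card (W →ₗ[R] T i) := Nat.card_pi
      _ = ∏ i, Nat.card (W →ₗ[R] W) := Finset.prod_congr rfl fun i _ => Nat.card_congr (e3 i)
      _ = ∏ i, Nat.card (T i →ₗ[R] W) :=
        (Finset.prod_congr rfl fun i _ => Nat.card_congr (e4 i)).symm
      _ = Nat.card (∀ i, (T i →ₗ[R] W)) := Nat.card_pi.symm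
      _ = Nat.card ((∀ i, T i) →ₗ[R] W) := (Nat.card_congr e2).symm
  have hcard2 : Nat.card ((∀ i, T i) →ₗ[R] W) ≤ t := by
    obtain ⟨x, hx⟩ := hcyc
    have hinj : Function.Injective (fun f : (∀ i, T i) →ₗ[R] W => f x) := by
      intro f f' hff
      apply LinearMap.ext_on hx
      intro y hy
      rw [Set.mem_singleton_iff] at hy
      subst hy
      exact hff
    exact Nat.card_le_card_of_injective _ hinj
  have hatomt : atomsF.card ≤ t - 1 :=
    le_trans hcardAtoms (Nat.sub_le_sub_right (le_of_eq_of_le hcard1 hcard2) 1)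
  -- cardinality facts for each atom
  have hcardP : ∀ P : Submodule R (∀ i, T i), IsAtom P → Nat.card ↥P = t := by
    intro P hP
    rw [ht]
    refine (Nat.card_congr ?_).symm
    exact ((LinearEquiv.ofInjective _ (hginj P hP)).trans
      (LinearEquiv.ofEq _ _ (hgrange P hP))).toEquiv
  have hcardQuot : ∀ P : Submodule R (∀ i, T i), IsAtom P →
      Nat.card ((∀ i, T i) ⧸ P.toAddSubgroup) * t = Nat.card (∀ i, T i) := by
    intro P hP
    have h1 := AddSubgroup.card_eq_card_quotient_mul_card_addSubgroup
      (α := ∀ i, T i) P.toAddSubgroup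
    have h2 : Nat.card ↥(P.toAddSubgroup) = t := by
      rw [← hcardP P hP]
      exact Nat.card_congr (Equiv.subtypeEquivRight fun x => by
        simp [Submodule.mem_toAddSubgroup])
    rw [h1, h2]
  -- the bad set of characters
  set badF : Finset (AddChar (∀ i, T i) ℂ) :=
    atomsF.biUnion (fun P => Finset.univ.filter
      (fun ψ : AddChar (∀ i, T i) ℂ => ∀ x ∈ P, ψ x = 1)) with hbadF
  have hfiltercard : ∀ P : Submodule R (∀ i, T i), IsAtom P →
      (Finset.univ.filter
        (fun ψ : AddChar (∀ i, T i) ℂ => ∀ x ∈ P, ψ x = 1)).card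
        ≤ Nat.card ((∀ i, T i) ⧸ P.toAddSubgroup) := by
    intro P hP
    rw [← Fintype.card_subtype]
    rw [← Nat.card_eq_fintype_card]
    refine le_trans (le_of_eq (Nat.card_congr (Equiv.subtypeEquivRight fun ψ => ?_)))
      (card_vanishing_le P.toAddSubgroup)
    constructor
    · intro h x hx
      exact h x (by simpa [Submodule.mem_toAddSubgroup] using hx)
    · intro h x hx
      exact h x (by simpa [Submodule.mem_toAddSubgroup] using hx)
  have hex : ∃ ψ : AddChar (∀ i, T i) ℂ, ψ ∉ badF := by
    rcases Finset.eq_empty_or_nonempty atomsF with hempty | ⟨P₀, hP₀⟩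
    · exact ⟨1, by simp [hbadF, hempty]⟩
    have hP₀atom : IsAtom P₀ := (Finset.mem_filter.mp hP₀).2
    set q := Nat.card ((∀ i, T i) ⧸ P₀.toAddSubgroup) with hq
    have hq0 : 0 < q := Nat.card_pos
    have hqall : ∀ P ∈ atomsF, Nat.card ((∀ i, T i) ⧸ P.toAddSubgroup) = q := by
      intro P hP
      have h1 := hcardQuot P (Finset.mem_filter.mp hP).2
      have h2 := hcardQuot P₀ hP₀atom
      exact Nat.eq_of_mul_eq_mul_right ht0 (h1.trans h2.symm)
    have hbadcard : badF.card < Fintype.card (AddChar (∀ i, T i) ℂ) := by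
      have hb1 : badF.card ≤ ∑ P ∈ atomsF, (Finset.univ.filter
          (fun ψ : AddChar (∀ i, T i) ℂ => ∀ x ∈ P, ψ x = 1)).card :=
        Finset.card_biUnion_le
      have hb2 : ∑ P ∈ atomsF, (Finset.univ.filter
          (fun ψ : AddChar (∀ i, T i) ℂ => ∀ x ∈ P, ψ x = 1)).card ≤ atomsF.card * q := by
        have := Finset.sum_le_card_nsmul atomsF _ q (fun P hP =>
          le_of_le_of_eq (hfiltercard P (Finset.mem_filter.mp hP).2) (hqall P hP))
        simpa [smul_eq_mul] using this
      have hb3 : atomsF.card * q ≤ (t - 1) * q := Nat.mul_le_mul_right q hatomt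
      have hb4 : (t - 1) * q < t * q :=
        (Nat.mul_lt_mul_right hq0).mpr (Nat.sub_lt ht0 Nat.one_pos)
      have hb5 : t * q = Fintype.card (AddChar (∀ i, T i) ℂ) := by
        rw [← Nat.card_eq_fintype_card, card_addChar, ← hcardQuot P₀ hP₀atom, mul_comm]
      omega
    by_contra hall
    push_neg at hall
    have : Finset.univ ⊆ badF := fun ψ _ => hall ψ
    have := Finset.card_le_card this
    rw [Finset.card_univ] at this
    omega
  obtain ⟨ψ, hψ⟩ := hex
  refine ⟨ψ, fun P hP => ?_⟩
  have hPmem : P ∈ atomsF := Finset.mem_filter.mpr ⟨Finset.mem_univ _, hP⟩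
  by_contra hno
  push_neg at hno
  exact hψ (Finset.mem_biUnion.mpr ⟨P, hPmem,
    Finset.mem_filter.mpr ⟨Finset.mem_univ _, hno⟩⟩)

end Part1d

open Function

section Part1e

theorem goodChar_pi {ι : Type*} [Fintype ι] {T : ι → Type*} [∀ i, AddCommGroup (T i)]
    [∀ i, Module R (T i)] [∀ i, IsSimpleModule R (T i)] [∀ i, Finite (T i)]
    (hcyc : ∃ x : ∀ i, T i, Submodule.span R {x} = ⊤) :
    GoodChar R (∀ i, T i) := by
  classical
  let st : Setoid ι := ⟨fun i j => Nonempty (T i ≃ₗ[R] T j),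
    ⟨fun i => ⟨LinearEquiv.refl R (T i)⟩,
     fun ⟨f⟩ => ⟨f.symm⟩, fun ⟨f⟩ ⟨g⟩ => ⟨f.trans g⟩⟩⟩
  let qm : ι → Quotient st := fun i => Quotient.mk st i
  let σ : (Σ c : Quotient st, {i // qm i = c}) ≃ ι := Equiv.sigmaFiberEquiv qm
  let E0 : ((p : Σ c : Quotient st, {i // qm i = c}) → T (σ p)) ≃ₗ[R] ∀ i, T i :=
    LinearEquiv.piCongrLeft R T σ
  let E1 := LinearEquiv.piCurry R (fun (c : Quotient st) (j : {i // qm i = c}) => T j.val)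
  let E : (∀ c : Quotient st, ∀ j : {i // qm i = c}, T j.val) ≃ₗ[R] ∀ i, T i :=
    E1.symm.trans E0
  let Mf : Quotient st → Type _ := fun c => ∀ j : {i // qm i = c}, T j.val
  have hcycPi : ∃ y : ∀ c, Mf c, Submodule.span R {y} = ⊤ :=
    cyclic_of_surjective E.symm.toLinearMap E.symm.surjective hcyc
  have hcycC : ∀ c, ∃ y : Mf c, Submodule.span R {y} = ⊤ := fun c =>
    cyclic_of_surjective (LinearMap.proj c) (Function.surjective_eval c) hcycPi
  have hrep : ∀ (c : Quotient st) (j : {i // qm i = c}),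
      Nonempty (T (Quotient.out c) ≃ₗ[R] T j.val) := by
    intro c j
    have h1 : qm j.val = qm (Quotient.out c) := by
      show Quotient.mk st j.val = Quotient.mk st (Quotient.out c)
      rw [Quotient.out_eq]
      exact j.2
    have h2 : Nonempty (T j.val ≃ₗ[R] T (Quotient.out c)) := Quotient.exact h1
    exact ⟨(Classical.choice h2).symm⟩
  have hgood : ∀ c, GoodChar R (Mf c) := fun c =>
    goodChar_isotypic (W := T (Quotient.out c)) (fun j => Classical.choice (hrep c j)) (hcycC c)
  have hsl : ∀ P : Submodule R (∀ c, Mf c), IsAtom P →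
      ∃ c, ∀ x ∈ P, ∀ c', c' ≠ c → x c' = 0 := by
    intro P hP
    haveI : IsSimpleModule R P := isSimpleModule_iff_isAtom.mpr hP
    have key : ∀ (c₀ : Quotient st) (z : ∀ c, Mf c), z ∈ P → z c₀ ≠ 0 →
        Nonempty ((T (Quotient.out c₀)) ≃ₗ[R] ↥P) := by
      intro c₀ z hzP hz
      set f := (LinearMap.proj c₀ (φ := Mf)).comp P.subtype with hfdef
      have hf0 : f ≠ 0 := by
        intro h
        apply hz
        have hzz : f ⟨z, hzP⟩ = z c₀ := rfl
        rw [h] at hzz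
        exact hzz.symm
      have hinj : Function.Injective f := LinearMap.injective_of_ne_zero hf0
      have hrangeAtom : IsAtom (LinearMap.range f) := by
        haveI : IsSimpleModule R (LinearMap.range f) :=
          IsSimpleModule.congr (LinearEquiv.ofInjective f hinj).symm
        exact IsSimpleModule.isAtom
      obtain ⟨j, ⟨φ⟩⟩ := atom_pi_iso (T := fun j : {i // qm i = c₀} => T j.val) _ hrangeAtom
      exact ⟨(Classical.choice (hrep c₀ j)).trans
        (φ.symm.trans (LinearEquiv.ofInjective f hinj).symm)⟩
    obtain ⟨x, hxP, hx0⟩ := Submodule.ne_bot_iff P |>.mp hP.1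
    obtain ⟨c, hc⟩ : ∃ c, x c ≠ 0 := by
      by_contra hcon
      push_neg at hcon
      exact hx0 (funext hcon)
    refine ⟨c, ?_⟩
    by_contra hcon
    push_neg at hcon
    obtain ⟨y, hyP, c', hc', hyc'⟩ := hcon
    obtain ⟨φ1⟩ := key c x hxP hc
    obtain ⟨φ2⟩ := key c' y hyP hyc'
    have hiso : Nonempty (T (Quotient.out c') ≃ₗ[R] T (Quotient.out c)) := ⟨φ2.trans φ1.symm⟩
    exact hc' (Quotient.out_equiv_out.mp hiso)
  exact GoodChar.of_linearEquiv E.symm (goodChar_pi_of_slices hsl hgood)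

end Part1e

open Function

section Part1f

theorem addchar_extend {A : Type*} [AddCommGroup A] [Finite A] (B : AddSubgroup A)
    (ψ : AddChar ↥B ℂ) : ∃ χ : AddChar A ℂ, ∀ b : ↥B, χ ↑b = ψ b := by
  classical
  let res : AddChar A ℂ →+ AddChar ↥B ℂ :=
    { toFun := fun χ => χ.compAddMonoidHom B.subtype
      map_zero' := by ext b; simp
      map_add' := fun χ₁ χ₂ => by ext b; simp }
  have hkermem : ∀ χ ∈ res.ker, ∀ x ∈ B, χ x = 1 := by
    intro χ hχ x hx
    have h1 : res χ = 0 := hχ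
    have h2 := congrArg (fun c : AddChar ↥B ℂ => c ⟨x, hx⟩) h1
    have h3 : (res χ) ⟨x, hx⟩ = 1 := by simpa using h2
    exact h3
  have hker : Nat.card ↥res.ker ≤ Nat.card (A ⧸ B) := by
    rw [← card_addChar (A ⧸ B)]
    apply Nat.card_le_card_of_injective
      (fun χp : ↥res.ker => quotChar B χp.1 (hkermem χp.1 χp.2))
    intro p q hpq
    apply Subtype.ext
    ext x
    have := congrArg (fun c : AddChar (A ⧸ B) ℂ => c (x : A ⧸ B)) hpq
    simpa [quotChar_mk] using this
  have hcardrange : Nat.card ↥res.range = Nat.card (AddChar ↥B ℂ) := by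
    have h1 : Nat.card (AddChar A ℂ) = Nat.card (AddChar A ℂ ⧸ res.ker) * Nat.card ↥res.ker :=
      AddSubgroup.card_eq_card_quotient_mul_card_addSubgroup res.ker
    have h2 : Nat.card (AddChar A ℂ ⧸ res.ker) = Nat.card ↥res.range :=
      Nat.card_congr (QuotientAddGroup.quotientKerEquivRange res).toEquiv
    have h3 : Nat.card A = Nat.card (A ⧸ B) * Nat.card ↥B :=
      AddSubgroup.card_eq_card_quotient_mul_card_addSubgroup B
    have h4 : Nat.card ↥res.range * Nat.card ↥res.ker = Nat.card (A ⧸ B) * Nat.card ↥B := by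
      rw [← h2, ← h1, card_addChar, h3]
    have h5 : Nat.card ↥B * Nat.card ↥res.ker ≤ Nat.card ↥res.range * Nat.card ↥res.ker := by
      rw [h4, mul_comm (Nat.card (A ⧸ B))]
      exact Nat.mul_le_mul_left _ hker
    haveI : Nonempty ↥res.ker := ⟨⟨0, res.ker.zero_mem⟩⟩
    have h6 : Nat.card ↥B ≤ Nat.card ↥res.range :=
      Nat.le_of_mul_le_mul_right h5 Nat.card_pos
    have h7 : Nat.card ↥res.range ≤ Nat.card (AddChar ↥B ℂ) :=
      Nat.card_le_card_of_injective _ Subtype.val_injective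
    rw [card_addChar ↥B] at h7 ⊢
    omega
  have htop : res.range = ⊤ := AddSubgroup.eq_top_of_card_eq _ hcardrange
  have hsurj : Function.Surjective res := by
    intro y
    have : y ∈ res.range := by rw [htop]; trivial
    exact this
  obtain ⟨χ, hχ⟩ := hsurj ψ
  exact ⟨χ, fun b => by rw [← hχ]; rfl⟩

end Part1f

open Function
open scoped DirectSum


section Part1g

theorem exists_generating_char {A : Type*} [AddCommGroup A] [Module R A] [Finite A]
    (hcyc : ∃ a : A, socle R A = Submodule.span R {a}) :
    ∃ χ : AddChar A ℂ, ∀ x : A, (∀ r : R, χ (r • x) = 1) → x = 0 := by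
  classical
  obtain ⟨a, ha⟩ := hcyc
  haveI hssim : IsSemisimpleModule R ↥(socle R A) := by
    have h1 : socle R A = ⨆ P ∈ {P : Submodule R A | IsAtom P}, P := sSup_eq_iSup
    rw [h1]
    exact isSemisimpleModule_biSup_of_isSemisimpleModule_submodule (fun P hP => by
      haveI : IsSimpleModule R ↥P := isSimpleModule_iff_isAtom.mpr hP
      infer_instance)
  have haS : a ∈ socle R A := by rw [ha]; exact Submodule.mem_span_singleton_self a
  have hgen : Submodule.span R {(⟨a, haS⟩ : ↥(socle R A))} = ⊤ := by
    apply Submodule.map_injective_of_injective (Submodule.injective_subtype (socle R A))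
    rw [Submodule.map_span, Submodule.map_top, Submodule.range_subtype]
    simp only [Set.image_singleton]
    have : ((socle R A).subtype ⟨a, haS⟩ : A) = a := rfl
    rw [this]
    exact ha.symm
  obtain ⟨sfam, hindep, hsup, hsimple⟩ :=
    IsSemisimpleModule.exists_sSupIndep_sSup_simples_eq_top R ↥(socle R A)
  haveI : ∀ (m : ↥sfam), IsSimpleModule R ↥(m.val) := fun m => hsimple _ m.2
  haveI : Finite ↥(socle R A) := inferInstance
  haveI : Finite (Submodule R ↥(socle R A)) := inferInstance
  haveI : Fintype ↥sfam := Fintype.ofFinite _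
  have hInt : DirectSum.IsInternal (fun i : ↥sfam => (i : Submodule R ↥(socle R A))) := by
    rw [DirectSum.isInternal_submodule_iff_iSupIndep_and_iSup_eq_top]
    constructor
    · exact (sSupIndep_iff _).mp hindep
    · rw [← sSup_eq_iSup']
      exact hsup
  let E1 : (⨁ i : ↥sfam, ↥(i.val)) ≃ₗ[R] ↥(socle R A) :=
    LinearEquiv.ofBijective (DirectSum.coeLinearMap _) hInt
  let E2 := DirectSum.linearEquivFunOnFintype R ↥sfam (fun i : ↥sfam => ↥(i.val))
  let E : ↥(socle R A) ≃ₗ[R] ∀ i : ↥sfam, ↥(i.val) := E1.symm.trans E2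
  have hcycPi : ∃ x : ∀ i : ↥sfam, ↥(i.val), Submodule.span R {x} = ⊤ :=
    cyclic_of_surjective E.toLinearMap E.surjective ⟨_, hgen⟩
  have hgoodPi : GoodChar R (∀ i : ↥sfam, ↥(i.val)) := goodChar_pi hcycPi
  have hgoodS : GoodChar R ↥(socle R A) := GoodChar.of_linearEquiv E hgoodPi
  obtain ⟨ψ, hψ⟩ := hgoodS
  let ι0 : ↥((socle R A).toAddSubgroup) →+ ↥(socle R A) :=
    { toFun := fun x => ⟨x.1, x.2⟩, map_zero' := rfl, map_add' := fun _ _ => rfl }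
  obtain ⟨χ, hχ⟩ := addchar_extend (socle R A).toAddSubgroup (ψ.compAddMonoidHom ι0)
  refine ⟨χ, fun x hx => ?_⟩
  by_contra hx0
  have hbot : (mker (R := R) χ) ≠ ⊥ := by
    intro hb
    apply hx0
    have hmem : x ∈ mker (R := R) χ := hx
    rw [hb] at hmem
    simpa using hmem
  obtain ⟨P, hPatom, hPle⟩ :=
    (IsAtomic.eq_bot_or_exists_atom_le (mker (R := R) χ)).resolve_left hbot
  have hPS : P ≤ socle R A := le_sSup hPatom
  have hatom' : IsAtom (P.comap (socle R A).subtype) := isAtom_comap_subtype _ _ hPatom hPS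
  obtain ⟨y, hyP, hy1⟩ := hψ _ hatom'
  apply hy1
  have h1 : χ ↑y = ψ y := by
    have := hχ ⟨y.1, y.2⟩
    simp at this
    exact this
  rw [← h1]
  have h2 : (y : A) ∈ mker (R := R) χ := hPle hyP
  have h3 := h2 (1 : R)
  rwa [one_smul] at h3

end Part1g


section Part2a

theorem mem_orbitG_self (G : Subgroup (A ≃ₗ[R] A)) (a : A) : a ∈ orbitG G a :=
  ⟨1, G.one_mem, rfl⟩

theorem orbitG_eq_of_mem {G : Subgroup (A ≃ₗ[R] A)} {a b : A} (h : b ∈ orbitG G a) :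
    orbitG G b = orbitG G a := by
  obtain ⟨g, hg, rfl⟩ := h
  ext c
  constructor
  · rintro ⟨g', hg', rfl⟩
    exact ⟨g' * g, G.mul_mem hg' hg, rfl⟩
  · rintro ⟨g', hg', rfl⟩
    refine ⟨g' * g⁻¹, G.mul_mem hg' (G.inv_mem hg), ?_⟩
    show g' (g⁻¹ (g a)) = g' a
    congr 1
    exact g.symm_apply_apply a

theorem mem_orbitG_comm {G : Subgroup (A ≃ₗ[R] A)} {a b : A} :
    a ∈ orbitG G b ↔ b ∈ orbitG G a := by
  constructor <;> intro h
  · have h2 := orbitG_eq_of_mem h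
    rw [h2]
    exact mem_orbitG_self G b
  · have h2 := orbitG_eq_of_mem h
    rw [h2]
    exact mem_orbitG_self G a

/-- The closure of `G` as a subgroup. -/
def closureSub (G : Subgroup (A ≃ₗ[R] A)) : Subgroup (A ≃ₗ[R] A) where
  carrier := {g | inClosure G g}
  one_mem' := fun a₀ => by
    show (1 : A ≃ₗ[R] A) '' orbitG G a₀ = orbitG G a₀
    rw [LinearEquiv.coe_one, Set.image_id]
  mul_mem' := by
    intro g h hg hh a₀
    show ⇑(g * h) '' orbitG G a₀ = orbitG G a₀
    have : ⇑(g * h) = ⇑g ∘ ⇑h := rfl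
    rw [this, Set.image_comp, hh a₀, hg a₀]
  inv_mem' := by
    intro g hg a₀
    show ⇑g⁻¹ '' orbitG G a₀ = orbitG G a₀
    conv_lhs => rw [← hg a₀]
    rw [← Set.image_comp]
    have : ⇑g⁻¹ ∘ ⇑g = id := funext fun x => g.symm_apply_apply x
    rw [this, Set.image_id]

theorem le_closureSub (G : Subgroup (A ≃ₗ[R] A)) : G ≤ closureSub G := by
  intro g hg
  intro a₀
  ext b
  constructor
  · rintro ⟨y, ⟨g', hg', rfl⟩, rfl⟩
    exact ⟨g * g', G.mul_mem hg hg', rfl⟩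
  · rintro ⟨g', hg', rfl⟩
    refine ⟨(g⁻¹ * g') a₀, ⟨g⁻¹ * g', G.mul_mem (G.inv_mem hg) hg', rfl⟩, ?_⟩
    show g (g⁻¹ (g' a₀)) = g' a₀
    exact g.apply_symm_apply (g' a₀)

end Part2a


section Part2b

theorem sum_invariant {G : Subgroup (A ≃ₗ[R] A)} [Fintype A] {n : ℕ} (a b : Fin n → A)
    (hswc : ∀ a₀ : A, swcG G a a₀ = swcG G b a₀)
    (Φ : A → ℂ) (hΦ : ∀ x y : A, y ∈ orbitG G x → Φ y = Φ x) :
    ∑ i, Φ (a i) = ∑ i, Φ (b i) := by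
  classical
  have hcount : ∀ y : A, (Finset.univ.filter (fun i => a i ∈ orbitG G y)).card
      = (Finset.univ.filter (fun i => b i ∈ orbitG G y)).card := by
    intro y
    have h1 := hswc y
    rw [swcG, swcG] at h1
    have h2 : Nat.card {i : Fin n // a i ∈ orbitG G y}
        = Nat.card {i : Fin n // b i ∈ orbitG G y} := by exact_mod_cast h1
    rwa [Nat.card_eq_fintype_card, Nat.card_eq_fintype_card, Fintype.card_subtype,
      Fintype.card_subtype] at h2
  set oc : A → ℂ := fun x => ((Finset.univ.filter (fun y => y ∈ orbitG G x)).card : ℂ) with hoc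
  have hoc_ne : ∀ x, oc x ≠ 0 := by
    intro x
    simp only [hoc, Ne, Nat.cast_eq_zero, Finset.card_eq_zero]
    intro hemp
    have hmem : x ∈ Finset.univ.filter (fun y => y ∈ orbitG G x) :=
      Finset.mem_filter.mpr ⟨Finset.mem_univ x, mem_orbitG_self G x⟩
    rw [hemp] at hmem
    exact absurd hmem (Finset.notMem_empty x)
  have hoc_eq : ∀ x y : A, y ∈ orbitG G x → oc y = oc x := by
    intro x y hxy
    have horb := orbitG_eq_of_mem hxy
    simp only [hoc, horb]
  set θ : A → ℂ := fun x => Φ x / oc x with hθ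
  have hΘ : ∀ x : A, (∑ y ∈ Finset.univ.filter (fun y => y ∈ orbitG G x), θ y) = Φ x := by
    intro x
    have hterm : ∀ y ∈ Finset.univ.filter (fun y => y ∈ orbitG G x), θ y = Φ x / oc x := by
      intro y hy
      have hy' : y ∈ orbitG G x := (Finset.mem_filter.mp hy).2
      simp only [hθ]
      rw [hΦ x y hy', hoc_eq x y hy']
    rw [Finset.sum_congr rfl hterm, Finset.sum_const, nsmul_eq_mul]
    show oc x * (Φ x / oc x) = Φ x
    rw [mul_comm, div_mul_cancel₀ _ (hoc_ne x)]
  have key : ∀ (c : Fin n → A), ∑ i, Φ (c i)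
      = ∑ y : A, θ y * ((Finset.univ.filter (fun i => c i ∈ orbitG G y)).card : ℂ) := by
    intro c
    calc ∑ i, Φ (c i)
        = ∑ i, ∑ y ∈ Finset.univ.filter (fun y => y ∈ orbitG G (c i)), θ y :=
          Finset.sum_congr rfl fun i _ => (hΘ (c i)).symm
      _ = ∑ i, ∑ y : A, if y ∈ orbitG G (c i) then θ y else 0 :=
          Finset.sum_congr rfl fun i _ => Finset.sum_filter _ _
      _ = ∑ y : A, ∑ i, if y ∈ orbitG G (c i) then θ y else 0 := Finset.sum_comm
      _ = ∑ y : A, ∑ i, if c i ∈ orbitG G y then θ y else 0 := by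
          refine Finset.sum_congr rfl fun y _ => Finset.sum_congr rfl fun i _ => ?_
          simp only [mem_orbitG_comm (a := y) (b := c i)]
      _ = ∑ y : A, θ y * ((Finset.univ.filter (fun i => c i ∈ orbitG G y)).card : ℂ) := by
          refine Finset.sum_congr rfl fun y _ => ?_
          rw [← Finset.sum_filter, Finset.sum_const, nsmul_eq_mul, mul_comm]
  rw [key a, key b]
  exact Finset.sum_congr rfl fun y _ => by rw [hcount y]

theorem count_eq_of_sum_eq {P : Type*} [Fintype P] {M : Type*} [AddCommGroup M] [Finite M]
    (F₁ F₂ : P → AddChar M ℂ)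
    (h : ∑ p, (F₁ p : M → ℂ) = ∑ p, (F₂ p : M → ℂ)) (ξ : AddChar M ℂ) :
    (Finset.univ.filter (fun p => F₁ p = ξ)).card
      = (Finset.univ.filter (fun p => F₂ p = ξ)).card := by
  classical
  haveI : Fintype (AddChar M ℂ) := Fintype.ofFinite _
  have hfib : ∀ F : P → AddChar M ℂ, ∑ p, (F p : M → ℂ)
      = ∑ ξ' : AddChar M ℂ,
        ((Finset.univ.filter (fun p => F p = ξ')).card : ℂ) • (ξ' : M → ℂ) := by
    intro F
    rw [← Finset.sum_fiberwise_of_maps_to (fun p _ => Finset.mem_univ (F p))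
      (fun p => (F p : M → ℂ))]
    refine Finset.sum_congr rfl fun ξ' _ => ?_
    rw [Finset.sum_congr rfl (fun p hp => by rw [(Finset.mem_filter.mp hp).2]),
      Finset.sum_const, Nat.cast_smul_eq_nsmul]
  have hsum : ∑ ξ' : AddChar M ℂ,
      ((((Finset.univ.filter (fun p => F₁ p = ξ')).card : ℂ))
        - (((Finset.univ.filter (fun p => F₂ p = ξ')).card : ℂ))) • (ξ' : M → ℂ) = 0 := by
    rw [Finset.sum_congr rfl (fun ξ' _ => sub_smul _ _ _), Finset.sum_sub_distrib,
      ← hfib F₁, ← hfib F₂, h, sub_self]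
  have hli := Fintype.linearIndependent_iff.mp (AddChar.linearIndependent M ℂ) _ hsum ξ
  have := sub_eq_zero.mp hli
  exact_mod_cast this

end Part2b

/-- If `soc(A)` is a cyclic `R`-module, then `A` has the extension property with
respect to the symmetrized weight composition `swc_G` for every subgroup
`G ≤ Aut_R(A)`. -/
theorem hasExtensionProperty_of_socle_cyclic [Finite R] [Finite A]
    (hcyc : ∃ a : A, socle R A = Submodule.span R {a}) :
    ∀ G : Subgroup (A ≃ₗ[R] A), HasExtensionProperty R A G := by
  classical
  intro G n hn C f hswc
  obtain ⟨χ, hχ⟩ := exists_generating_char (R := R) hcyc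
  haveI : Fintype A := Fintype.ofFinite _
  set H := closureSub G with hH
  haveI : Finite (A ≃ₗ[R] A) :=
    Finite.of_injective (fun e => (⇑e : A → A))
      (fun e₁ e₂ h => by ext x; exact congrFun h x)
  haveI : Fintype ↥H := Fintype.ofFinite _
  set lam : Fin n → (↥C →ₗ[R] A) := fun i => (LinearMap.proj i).comp C.subtype with hlam
  set mu : Fin n → (↥C →ₗ[R] A) := fun i => (LinearMap.proj i).comp f with hmu
  set cmp : ↥H → (↥C →ₗ[R] A) → (↥C →ₗ[R] A) :=
    fun g l => ((g : A ≃ₗ[R] A) : A →ₗ[R] A).comp l with hcmp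
  set ξc : (↥C →ₗ[R] A) → AddChar ↥C ℂ :=
    fun l => χ.compAddMonoidHom l.toAddMonoidHom with hξc
  have hnz : ∀ u : A, χ u ≠ 0 := by
    intro u h0
    have h1 : χ u * χ (-u) = 1 := by
      rw [← AddChar.map_add_eq_mul, add_neg_cancel, AddChar.map_zero_eq_one]
    rw [h0, zero_mul] at h1
    exact zero_ne_one h1
  have hξinj : Function.Injective ξc := by
    intro l l' hll
    apply LinearMap.ext
    intro c
    have hpt : ∀ c : ↥C, χ (l c) = χ (l' c) := by
      intro c
      have := congrArg (fun (t : AddChar ↥C ℂ) => t c) hll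
      simpa [hξc] using this
    have hsub : ∀ r : R, χ (r • (l c - l' c)) = 1 := by
      intro r
      have h1 : r • (l c - l' c) = l (r • c) - l' (r • c) := by
        rw [smul_sub, map_smul, map_smul]
      rw [h1, AddChar.map_sub_eq_div, hpt (r • c), div_self (hnz _)]
    have := hχ _ hsub
    exact sub_eq_zero.mp this
  -- the invariant test functions give equal sums of characters
  have hkey : ∀ ξ : AddChar ↥C ℂ,
      (Finset.univ.filter (fun p : Fin n × ↥H => ξc (cmp p.2 (mu p.1)) = ξ)).card
      = (Finset.univ.filter (fun p : Fin n × ↥H => ξc (cmp p.2 (lam p.1)) = ξ)).card := by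
    apply count_eq_of_sum_eq
    funext c
    rw [Finset.sum_apply, Finset.sum_apply]
    have hinv : ∀ (x y : A), y ∈ orbitG G x →
        (∑ g : ↥H, χ ((g : A ≃ₗ[R] A) y)) = ∑ g : ↥H, χ ((g : A ≃ₗ[R] A) x) := by
      intro x y hxy
      obtain ⟨g₀, hg₀, rfl⟩ := hxy
      have hg₀H : g₀ ∈ H := le_closureSub G hg₀
      refine Fintype.sum_equiv
        ⟨fun g => ⟨(g : A ≃ₗ[R] A) * g₀, H.mul_mem g.2 hg₀H⟩,
         fun g => ⟨(g : A ≃ₗ[R] A) * g₀⁻¹, H.mul_mem g.2 (H.inv_mem hg₀H)⟩,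
         fun g => Subtype.ext (by show (g : A ≃ₗ[R] A) * g₀ * g₀⁻¹ = _; group),
         fun g => Subtype.ext (by show (g : A ≃ₗ[R] A) * g₀⁻¹ * g₀ = _; group)⟩
        _ _ ?_
      intro g
      rfl
    have hmain := sum_invariant (G := G) (f c : Fin n → A) (c : Fin n → A)
      (hswc c) (fun x => ∑ g : ↥H, χ ((g : A ≃ₗ[R] A) x)) hinv
    rw [Fintype.sum_prod_type, Fintype.sum_prod_type]
    simp only [hξc, hcmp, hmu, hlam, AddChar.compAddMonoidHom_apply,
      LinearMap.toAddMonoidHom_coe, LinearMap.comp_apply, LinearMap.proj_apply,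
      Submodule.subtype_apply, LinearEquiv.coe_coe]
    simpa using hmain

  -- stabilizer counting: fiberwise counts of classes agree
  have refl' : ∀ l : ↥C →ₗ[R] A, ∃ g : ↥H, cmp g l = l :=
    fun l => ⟨1, LinearMap.ext fun x => rfl⟩
  have symm' : ∀ {l l' : ↥C →ₗ[R] A}, (∃ g : ↥H, cmp g l = l') → ∃ g : ↥H, cmp g l' = l := by
    rintro l l' ⟨g, rfl⟩
    exact ⟨g⁻¹, LinearMap.ext fun x => (g : A ≃ₗ[R] A).symm_apply_apply (l x)⟩
  have trans' : ∀ {l l' l'' : ↥C →ₗ[R] A}, (∃ g : ↥H, cmp g l = l') →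
      (∃ g : ↥H, cmp g l' = l'') → ∃ g : ↥H, cmp g l = l'' := by
    rintro l l' l'' ⟨g, rfl⟩ ⟨g', rfl⟩
    exact ⟨g' * g, LinearMap.ext fun x => rfl⟩
  set strel : Setoid (↥C →ₗ[R] A) :=
    ⟨fun l l' => ∃ g : ↥H, cmp g l = l', ⟨refl', symm', trans'⟩⟩ with hstrel
  have hfiber : ∀ ν : ↥C →ₗ[R] A,
      (Finset.univ.filter (fun i : Fin n => (∃ g : ↥H, cmp g (lam i) = ν))).card
      = (Finset.univ.filter (fun i : Fin n => (∃ g : ↥H, cmp g (mu i) = ν))).card := by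
    intro ν
    set s := (Finset.univ.filter (fun g : ↥H => cmp g ν = ν)).card with hs
    have hs0 : 0 < s := Finset.card_pos.mpr
      ⟨1, Finset.mem_filter.mpr ⟨Finset.mem_univ _, by apply LinearMap.ext; intro x; rfl⟩⟩
    have hgcount : ∀ l : ↥C →ₗ[R] A,
        (Finset.univ.filter (fun g : ↥H => cmp g l = ν)).card
        = if (∃ g : ↥H, cmp g l = ν) then s else 0 := by
      intro l
      split_ifs with hex
      · obtain ⟨g₀, hg₀⟩ := hex
        rw [hs]
        apply Finset.card_bij' (fun g _ => g * g₀⁻¹) (fun g _ => g * g₀)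
        · intro g hg
          rw [Finset.mem_filter] at hg ⊢
          refine ⟨Finset.mem_univ _, ?_⟩
          have h1 : cmp (g * g₀⁻¹) ν = cmp (g * g₀⁻¹) (cmp g₀ l) := by rw [hg₀]
          have h2 : cmp (g * g₀⁻¹) (cmp g₀ l) = cmp (g * g₀⁻¹ * g₀) l := by
            apply LinearMap.ext; intro x; rfl
          rw [h1, h2]
          have h3 : g * g₀⁻¹ * g₀ = g := by group
          rw [h3, hg.2]
        · intro g hg
          rw [Finset.mem_filter] at hg ⊢
          refine ⟨Finset.mem_univ _, ?_⟩
          have h2 : cmp (g * g₀) l = cmp g (cmp g₀ l) := by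
            apply LinearMap.ext; intro x; rfl
          rw [h2, hg₀, hg.2]
        · intro g _
          group
        · intro g _
          group
      · rw [Finset.card_eq_zero, Finset.filter_eq_empty_iff]
        intro g _
        exact fun hgl => hex ⟨g, hgl⟩
    have hpair : ∀ (v : Fin n → (↥C →ₗ[R] A)),
        (Finset.univ.filter (fun p : Fin n × ↥H => ξc (cmp p.2 (v p.1)) = ξc ν)).card
        = s * (Finset.univ.filter (fun i : Fin n => (∃ g : ↥H, cmp g (v i) = ν))).card := by
      intro v
      have hfeq : (Finset.univ.filter (fun p : Fin n × ↥H => ξc (cmp p.2 (v p.1)) = ξc ν))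
          = (Finset.univ.filter (fun p : Fin n × ↥H => cmp p.2 (v p.1) = ν)) := by
        apply Finset.filter_congr
        intro p _
        exact ⟨fun h => hξinj h, fun h => by rw [h]⟩
      rw [hfeq, Finset.card_filter, Fintype.sum_prod_type]
      have hin : ∀ i : Fin n, (∑ g : ↥H, if cmp g (v i) = ν then 1 else 0)
          = if (∃ g : ↥H, cmp g (v i) = ν) then s else 0 := by
        intro i
        rw [← Finset.card_filter]
        exact hgcount (v i)
      rw [Finset.sum_congr rfl (fun i _ => hin i), ← Finset.sum_filter,
        Finset.sum_const, smul_eq_mul, mul_comm]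
    have h3 := hkey (ξc ν)
    rw [hpair lam, hpair mu] at h3
    exact (Nat.eq_of_mul_eq_mul_left hs0 h3).symm
  -- build the permutation
  set w₁ : Fin n → Quotient strel := fun i => Quotient.mk strel (lam i) with hw₁
  set w₂ : Fin n → Quotient strel := fun i => Quotient.mk strel (mu i) with hw₂
  have hwcount : ∀ ζ : Quotient strel,
      Fintype.card {i // w₂ i = ζ} = Fintype.card {i // w₁ i = ζ} := by
    intro ζ
    rw [Fintype.card_subtype, Fintype.card_subtype]
    have hcl : ∀ l : ↥C →ₗ[R] A,
        (Quotient.mk strel l = ζ) ↔ (∃ g : ↥H, cmp g l = Quotient.out ζ) := by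
      intro l
      constructor
      · intro hl
        have h1 : Quotient.mk strel l = Quotient.mk strel (Quotient.out ζ) := by
          rw [hl, Quotient.out_eq]
        exact Quotient.exact h1
      · intro hex
        have h1 : Quotient.mk strel l = Quotient.mk strel (Quotient.out ζ) :=
          Quotient.sound hex
        rw [h1, Quotient.out_eq]
    rw [Finset.filter_congr (fun i _ => hcl (mu i)),
      Finset.filter_congr (fun i _ => hcl (lam i))]
    exact (hfiber (Quotient.out ζ)).symm
  have fibEquiv : ∀ ζ : Quotient strel, {i // w₂ i = ζ} ≃ {i // w₁ i = ζ} :=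
    fun ζ => Fintype.equivOfCardEq (hwcount ζ)
  set π : Equiv.Perm (Fin n) :=
    ((Equiv.sigmaFiberEquiv w₂).symm.trans ((Equiv.sigmaCongrRight fibEquiv).trans
      (Equiv.sigmaFiberEquiv w₁))) with hπ
  have hπprop : ∀ i, w₁ (π i) = w₂ i := by
    intro i
    exact (fibEquiv (w₂ i) ⟨i, rfl⟩).2
  have hmatch : ∀ i, ∃ g : ↥H, cmp g (lam (π i)) = mu i := by
    intro i
    exact Quotient.exact (hπprop i)
  choose gs hgs using hmatch
  refine ⟨fun a i => ((gs i : A ≃ₗ[R] A)) (a (π i)), ⟨π, fun i => (gs i : A ≃ₗ[R] A),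
    fun i => (gs i).2, fun a i => rfl⟩, ?_⟩
  intro c
  funext i
  have h := congrArg (fun l : ↥C →ₗ[R] A => l c) (hgs i)
  simp only [hcmp, hmu, hlam, LinearMap.comp_apply, LinearMap.proj_apply,
    Submodule.subtype_apply, LinearEquiv.coe_coe] at h
  exact h
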